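/- Let d be a finite set of tuples of type τ with attribute maps lhs : τ → α and rhs : τ → β, let Q be a predicate on β, and let A = {t ∈ d | Q (rhs t)} be the answer of a select query filtering on the rhs attribute of the FD lhs → rhs. Then every tuple of d whose rhs value occurs among the rhs values of tuples of A already belongs to A; consequently the one-step relaxation of A equals A together with only the lhs-matching tuples: A ∪ {t ∈ d | lhs t ∈ lhs '' A ∨ rhs t ∈ rhs '' A} = A ∪ {t ∈ d | lhs t ∈ lhs '' A}. Hence the query-result relaxation algorithm requires one iteration to enable accurate candidate fixes for SP queries with a filter on the rhs of an FD. -/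
import Mathlib

/-- For an SP query filtering on the rhs of an FD `lhs → rhs`, every tuple of `d`
whose rhs value occurs among the rhs values of the answer `A` already belongs to `A`, and hence
the one-step relaxation of `A` equals `A` together with only the lhs-matching tuples; so the
relaxation algorithm needs one iteration. -/
theorem sp_rhs_filter_one_iteration
    {τ α β : Type*} [DecidableEq τ] [DecidableEq α] [DecidableEq β]
    (d : Finset τ) (lhs : τ → α) (rhs : τ → β)
    (Q : β → Prop) [DecidablePred Q]
    (A : Finset τ) (hA : A = d.filter (fun t => Q (rhs t))) :
    (∀ t ∈ d, rhs t ∈ A.image rhs → t ∈ A) ∧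
    A ∪ d.filter (fun t => lhs t ∈ A.image lhs ∨ rhs t ∈ A.image rhs)
      = A ∪ d.filter (fun t => lhs t ∈ A.image lhs) := by
  have key : ∀ t ∈ d, rhs t ∈ A.image rhs → t ∈ A := by
    intro t ht hmem
    obtain ⟨s, hs, hst⟩ := Finset.mem_image.mp hmem
    rw [hA, Finset.mem_filter] at hs ⊢
    exact ⟨ht, hst ▸ hs.2⟩
  refine ⟨key, ?_⟩
  ext t
  simp only [Finset.mem_union, Finset.mem_filter]
  constructor
  · rintro (h | ⟨ht, h | h⟩)
    · exact Or.inl h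
    · exact Or.inr ⟨ht, h⟩
    · exact Or.inl (key t ht h)
  · rintro (h | ⟨ht, h⟩)
    · exact Or.inl h
    · exact Or.inr ⟨ht, Or.inl h⟩
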